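/- Let L and M be even lattices and U the hyperbolic plane with standard basis e, f. If there is an isometry φ : L ⊕ U → M ⊕ U with φ(f) = f, then the composition of φ restricted to L with the orthogonal projection onto M is an isometry L ≅ M. -/

import Mathlib

/-- Let `L` and `M` be even lattices and `U` the hyperbolic plane with
standard basis `e, f`.  We model `L ⊕ U` as `L × ℤ × ℤ`, a vector `(x, a, b)` standing for
`x + a·e + b·f`, with the bilinear form `B_L x y + a b' + a' b`.  If `φ : L ⊕ U ≃ M ⊕ U` is an
isometry with `φ(f) = f`, then the composition of `φ|_L` with the orthogonal projection onto
`M` is an isometry `L ≅ M`. -/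
theorem stmt_0
    (L M : Type) [AddCommGroup L] [Module ℤ L] [AddCommGroup M] [Module ℤ M]
    [Module.Free ℤ L] [Module.Finite ℤ L] [Module.Free ℤ M] [Module.Finite ℤ M]
    (BL : L →ₗ[ℤ] L →ₗ[ℤ] ℤ) (BM : M →ₗ[ℤ] M →ₗ[ℤ] ℤ)
    (hLsymm : ∀ x y, BL x y = BL y x) (hMsymm : ∀ x y, BM x y = BM y x)
    (hLeven : ∀ x, Even (BL x x)) (hMeven : ∀ x, Even (BM x x))
    (hLnd : ∀ x, (∀ y, BL x y = 0) → x = 0)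
    (hMnd : ∀ x, (∀ y, BM x y = 0) → x = 0)
    (φ : (L × ℤ × ℤ) ≃ₗ[ℤ] (M × ℤ × ℤ))
    (hφ : ∀ x y : L × ℤ × ℤ,
      BM (φ x).1 (φ y).1 + (φ x).2.1 * (φ y).2.2 + (φ y).2.1 * (φ x).2.2
        = BL x.1 y.1 + x.2.1 * y.2.2 + y.2.1 * x.2.2)
    (hf : φ (0, 0, 1) = (0, 0, 1)) :
    Function.Bijective (fun x : L => (φ (x, 0, 0)).1) ∧
      ∀ x y : L, BM (φ (x, 0, 0)).1 (φ (y, 0, 0)).1 = BL x y := by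
  have ha : ∀ v : L × ℤ × ℤ, (φ v).2.1 = v.2.1 := by
    intro v
    have h := hφ v (0, 0, 1)
    rw [hf] at h
    simpa using h
  have hfe : ∀ d : ℤ, φ (0, 0, d) = (0, 0, d) := by
    intro d
    have h1 : ((0:L), (0:ℤ), d) = d • ((0:L), (0:ℤ), (1:ℤ)) := by simp; exact (zsmul_zero d).symm
    rw [h1, map_smul, hf]
    simp
    exact zsmul_zero d
  have hform : ∀ x y : L, BM (φ (x, 0, 0)).1 (φ (y, 0, 0)).1 = BL x y := by
    intro x y
    have h := hφ (x, 0, 0) (y, 0, 0)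
    rw [ha (x, 0, 0), ha (y, 0, 0)] at h
    simpa using h
  refine ⟨⟨?_, ?_⟩, hform⟩
  · intro x y h
    simp only at h
    have key : φ ((x, 0, 0) - (y, 0, 0)) =
        φ (0, 0, (φ ((x:L), (0:ℤ), (0:ℤ))).2.2 - (φ ((y:L), (0:ℤ), (0:ℤ))).2.2) := by
      rw [map_sub, hfe]
      have h2 := ha (x, (0:ℤ), (0:ℤ))
      have h3 := ha (y, (0:ℤ), (0:ℤ))
      refine Prod.ext ?_ (Prod.ext ?_ ?_)
      · simp only [Prod.fst_sub, h, sub_self]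
      · simp only [Prod.snd_sub, Prod.fst_sub, h2, h3, sub_self]
      · simp only [Prod.snd_sub]
    have h4 := φ.injective key
    have h5 := congrArg Prod.fst h4
    simp at h5
    exact sub_eq_zero.mp h5
  · intro m
    set w := φ.symm (m, 0, 0) with hw
    have hφw : φ w = (m, 0, 0) := φ.apply_symm_apply _
    have hw2 : w.2.1 = 0 := by
      have := ha w
      rw [hφw] at this
      exact this.symm
    refine ⟨w.1, ?_⟩
    have hsplit : ((w.1 : L), (0:ℤ), (0:ℤ)) = w - (0, 0, w.2.2) := by
      ext <;> simp [hw2]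
    show (φ (w.1, 0, 0)).1 = m
    rw [hsplit, map_sub, hfe, hφw]
    simp
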